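/- Let Z be a linear subspace of ℝⁿ with Z ≠ {0}, let C ≥ 1, and let 1 ≤ k ≤ n. If for every w ∈ Z and every subset K ⊆ {1,…,n} with |K| = k one has C·‖w_K‖₁ ≤ ‖w_K̄‖₁, then k ≤ n/(C+1). -/

import Mathlib

/-- The ℓ1 norm of a vector in ℝⁿ. -/
noncomputable def l1 {n : ℕ} (x : Fin n → ℝ) : ℝ := ∑ i, |x i|

/-- The restriction of a vector to the coordinates in `K` (zero outside `K`). -/
def restr {n : ℕ} (K : Finset (Fin n)) (x : Fin n → ℝ) : Fin n → ℝ :=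
  fun i => if i ∈ K then x i else 0

open Finset

theorem count_lemma {n k : ℕ} (hk1 : 1 ≤ k) (i : Fin n) :
    (((powersetCard k (univ : Finset (Fin n)))).filter (fun K => i ∈ K)).card
      = (n-1).choose (k-1) := by
  have : (((powersetCard k (univ : Finset (Fin n)))).filter (fun K => i ∈ K)).card
      = (powersetCard (k-1) ((univ : Finset (Fin n)).erase i)).card := by
    refine card_bij' (fun K _ => K.erase i) (fun K _ => insert i K) ?_ ?_ ?_ ?_
    · intro K hK
      simp only [mem_filter, mem_powersetCard] at hK
      refine mem_powersetCard.2 ⟨erase_subset_erase _ hK.1.1, ?_⟩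
      rw [card_erase_of_mem hK.2, hK.1.2]
    · intro K hK
      simp only [mem_powersetCard, subset_erase] at hK
      refine mem_filter.2 ⟨mem_powersetCard.2 ⟨subset_univ _, ?_⟩, mem_insert_self i K⟩
      rw [card_insert_of_notMem hK.1.2, hK.2, Nat.sub_add_cancel hk1]
    · intro K hK
      exact insert_erase (mem_filter.1 hK).2
    · intro K hK
      simp only [mem_powersetCard, subset_erase] at hK
      exact erase_insert hK.1.2
  rw [this, card_powersetCard, card_erase_of_mem (mem_univ i), card_univ, Fintype.card_fin]

theorem stmt_11 {n : ℕ} (Z : Submodule ℝ (Fin n → ℝ)) (hZ : Z ≠ ⊥)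
    (C : ℝ) (hC : 1 ≤ C) (k : ℕ) (hk1 : 1 ≤ k) (hkn : k ≤ n)
    (h : ∀ w ∈ Z, ∀ K : Finset (Fin n), K.card = k →
      C * l1 (restr K w) ≤ l1 (restr Kᶜ w)) :
    (k : ℝ) ≤ n / (C + 1) := by
  classical
  obtain ⟨w, hwZ, hw0⟩ := Submodule.exists_mem_ne_zero_of_ne_bot hZ
  set S : ℝ := ∑ i, |w i| with hSdef
  have hS : 0 < S := by
    obtain ⟨i, hi⟩ := Function.ne_iff.1 hw0
    exact Finset.sum_pos' (fun j _ => abs_nonneg _) ⟨i, mem_univ i, abs_pos.2 hi⟩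
  have hl1 : ∀ K : Finset (Fin n), l1 (restr K w) = ∑ i ∈ K, |w i| := by
    intro K
    simp [l1, restr, apply_ite abs, abs_zero, Finset.sum_ite_mem]
  have hl1c : ∀ K : Finset (Fin n), l1 (restr Kᶜ w) = S - ∑ i ∈ K, |w i| := by
    intro K
    have := Finset.sum_compl_add_sum K (fun i => |w i|)
    rw [hl1]
    linarith
  set P := powersetCard k (univ : Finset (Fin n)) with hPdef
  set B : ℕ := (n-1).choose (k-1) with hBdef
  have hT : ∑ K ∈ P, ∑ i ∈ K, |w i| = B * S := by
    calc ∑ K ∈ P, ∑ i ∈ K, |w i|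
        = ∑ K ∈ P, ∑ i : Fin n, (if i ∈ K then |w i| else 0) := by
          refine Finset.sum_congr rfl fun K _ => ?_
          rw [Finset.sum_ite_mem, univ_inter]
      _ = ∑ i : Fin n, ∑ K ∈ P, (if i ∈ K then |w i| else 0) := Finset.sum_comm
      _ = ∑ i : Fin n, (B : ℝ) * |w i| := by
          refine Finset.sum_congr rfl fun i _ => ?_
          rw [← Finset.sum_filter, Finset.sum_const, count_lemma hk1 i, nsmul_eq_mul]
      _ = B * S := by rw [← Finset.mul_sum]
  have hsum : C * (B * S) ≤ (n.choose k : ℝ) * S - B * S := by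
    have hle : ∑ K ∈ P, C * l1 (restr K w) ≤ ∑ K ∈ P, l1 (restr Kᶜ w) :=
      Finset.sum_le_sum fun K hK => h w hwZ K (Finset.mem_powersetCard.1 hK).2
    have hL : ∑ K ∈ P, C * l1 (restr K w) = C * (B * S) := by
      simp_rw [hl1]
      rw [← Finset.mul_sum, hT]
    have hR : ∑ K ∈ P, l1 (restr Kᶜ w) = (n.choose k : ℝ) * S - B * S := by
      simp_rw [hl1c]
      rw [Finset.sum_sub_distrib, Finset.sum_const, hT, hPdef, card_powersetCard,
        card_univ, Fintype.card_fin, nsmul_eq_mul]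
    rw [hL, hR] at hle
    exact hle
  have h1 : (C + 1) * B ≤ (n.choose k : ℝ) := by
    nlinarith [hS, hsum]
  have hid : (n : ℝ) * B = (n.choose k : ℝ) * k := by
    have hnat : n * B = n.choose k * k := by
      have h3 := Nat.add_one_mul_choose_eq (n - 1) (k - 1)
      have e1 : n - 1 + 1 = n := by omega
      have e2 : k - 1 + 1 = k := by omega
      rw [e1, e2] at h3
      exact h3
    exact_mod_cast congrArg (Nat.cast : ℕ → ℝ) hnat
  have hBpos : (0 : ℝ) < B := by
    have : 0 < B := Nat.choose_pos (by omega)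
    exact_mod_cast this
  rw [le_div_iff₀ (by linarith : (0:ℝ) < C + 1)]
  have h2 : ((C + 1) * B) * k ≤ (n.choose k : ℝ) * k :=
    mul_le_mul_of_nonneg_right h1 (Nat.cast_nonneg k)
  nlinarith [h2, hid, hBpos]
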